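/- Let d ≥ 2, 0 < β < d and q > 1. If there exist g ∈ L^1(B_1) and h ∈ L^q(B_1) (B_1 ⊂ R^d the unit ball) such that | |x|^{−β} − |y|^{−β} | ≤ |x − y| ( g(x) + h(y) ) for all x, y ∈ B_1, then q ≤ (d−1)/β. -/

import Mathlib

open MeasureTheory Set
open scoped ENNReal NNReal RealInnerProductSpace BigOperators

noncomputable section

abbrev Rd (d : ℕ) := EuclideanSpace ℝ (Fin d)
open Filter
open scoped Topology


lemma AO_nontrivial (d : ℕ) (hd : 1 ≤ d) : Nontrivial (Rd d) := by
  have : Nonempty (Fin d) := ⟨⟨0, hd⟩⟩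
  infer_instance

lemma AO_annulus_vol (d : ℕ) (hd : 2 ≤ d) (r : ℝ) (hr : 0 < r) :
    (volume (Metric.ball (0 : Rd d) (2*r) \ Metric.ball (0 : Rd d) r)).toReal
      = ((2:ℝ)^d - 1) * r^d * (volume (Metric.ball (0 : Rd d) 1)).toReal := by
  haveI := AO_nontrivial d (by omega)
  have hsub : Metric.ball (0 : Rd d) r ⊆ Metric.ball (0 : Rd d) (2*r) :=
    Metric.ball_subset_ball (by linarith)
  have hfin : volume (Metric.ball (0 : Rd d) r) ≠ ∞ := measure_ball_lt_top.ne
  rw [measure_diff hsub measurableSet_ball.nullMeasurableSet hfin,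
    ENNReal.toReal_sub_of_le (measure_mono hsub) measure_ball_lt_top.ne,
    Measure.addHaar_ball _ _ (by linarith : (0:ℝ) ≤ 2*r),
    Measure.addHaar_ball _ _ hr.le, finrank_euclideanSpace_fin,
    ENNReal.toReal_mul, ENNReal.toReal_mul, ENNReal.toReal_ofReal (by positivity),
    ENNReal.toReal_ofReal (by positivity)]
  ring

lemma AO_ball_pos (d : ℕ) (hd : 2 ≤ d) :
    0 < (volume (Metric.ball (0 : Rd d) 1)).toReal := by
  haveI := AO_nontrivial d (by omega)
  exact ENNReal.toReal_pos (Metric.measure_ball_pos _ _ one_pos).ne' measure_ball_lt_top.ne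


def AO_c1 (β : ℝ) : ℝ := (1 - (2:ℝ) ^ (-β)) / 3
def AO_Br (d : ℕ) : ℝ := (volume (Metric.ball (0 : Rd d) 1)).toReal
def AO_I (d : ℕ) (g : Rd d → ℝ) (s : ℝ) : ℝ :=
  ∫ x in Metric.ball (0 : Rd d) (2*s) \ Metric.ball (0 : Rd d) s, |g x|
def AO_G (d : ℕ) (g : Rd d → ℝ) (s : ℝ) : ℝ :=
  2 * AO_I d g s / (((2:ℝ)^d - 1) * s^d * AO_Br d) + s
def AO_W (d : ℕ) (g : Rd d → ℝ) (β s : ℝ) : ℝ := AO_c1 β / (2 * s * AO_G d g s)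
def AO_rho (d : ℕ) (g : Rd d → ℝ) (β s : ℝ) : ℝ :=
  min (s/2) ((AO_W d g β s) ^ (1/β))

lemma AO_c1_pos {β : ℝ} (hβ0 : 0 < β) : 0 < AO_c1 β := by
  have := Real.rpow_lt_one_of_one_lt_of_neg one_lt_two (neg_lt_zero.2 hβ0)
  unfold AO_c1; linarith

lemma AO_two_pow_lt (d : ℕ) (hd : 2 ≤ d) : (1:ℝ) < 2^d := by
  calc (1:ℝ) < 2^2 := by norm_num
  _ ≤ 2^d := pow_le_pow_right₀ (by norm_num) hd

lemma AO_I_nonneg (d : ℕ) (g : Rd d → ℝ) (s : ℝ) : 0 ≤ AO_I d g s :=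
  setIntegral_nonneg (measurableSet_ball.diff measurableSet_ball) (fun x _ => abs_nonneg _)

lemma AO_G_pos (d : ℕ) (hd : 2 ≤ d) (g : Rd d → ℝ) {s : ℝ} (hs : 0 < s) :
    0 < AO_G d g s := by
  have h1 : 0 < ((2:ℝ)^d - 1) * s^d * AO_Br d := by
    have h2 := AO_two_pow_lt d hd
    have hBr : 0 < AO_Br d := AO_ball_pos d hd
    exact mul_pos (mul_pos (by linarith) (by positivity)) hBr
  have := AO_I_nonneg d g s
  have : 0 ≤ 2 * AO_I d g s / (((2:ℝ)^d - 1) * s^d * AO_Br d) :=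
    div_nonneg (by linarith) h1.le
  unfold AO_G; linarith

lemma AO_W_pos (d : ℕ) (hd : 2 ≤ d) (g : Rd d → ℝ) {β s : ℝ} (hβ0 : 0 < β) (hs : 0 < s) :
    0 < AO_W d g β s :=
  div_pos (AO_c1_pos hβ0) (by have := AO_G_pos d hd g hs; positivity)

lemma AO_rho_pos (d : ℕ) (hd : 2 ≤ d) (g : Rd d → ℝ) {β s : ℝ} (hβ0 : 0 < β) (hs : 0 < s) :
    0 < AO_rho d g β s :=
  lt_min (by linarith) (Real.rpow_pos_of_pos (AO_W_pos d hd g hβ0 hs) _)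

lemma AO_exists_small (d : ℕ) (f : Rd d → ℝ) (A : Set (Rd d)) (hA : MeasurableSet A)
    (hf : IntegrableOn (fun x => |f x|) A volume)
    (hvol : 0 < (volume A).toReal) (hfin : volume A ≠ ∞) (c : ℝ) (hc : 0 < c) :
    ∃ x ∈ A, |f x| ≤ 2*(∫ x in A, |f x|)/(volume A).toReal + c := by
  by_contra hcon
  push_neg at hcon
  set I := ∫ x in A, |f x| with hI
  set v := (volume A).toReal with hv
  have hI0 : 0 ≤ I := setIntegral_nonneg hA (fun x _ => abs_nonneg _)
  have hmono : ∫ x in A, (2*I/v + c) ≤ ∫ x in A, |f x| :=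
    setIntegral_mono_on (integrableOn_const hfin) hf hA
      (fun x hx => (hcon x hx).le)
  rw [setIntegral_const, smul_eq_mul, measureReal_def, ← hv, ← hI] at hmono
  have hexp : v * (2*I/v + c) = 2*I + c*v := by
    field_simp
  rw [hexp] at hmono
  nlinarith

lemma AO_ev_lt (C E M : ℝ) (hC : 0 < C) (hE : E < 0) :
    ∀ᶠ j : ℕ in atTop, M < C * (((1/2:ℝ)^j) ^ E) := by
  have h2 : (1:ℝ) < 2 ^ (-E) := by
    rw [show (1:ℝ) = (2:ℝ)^(0:ℝ) by simp]
    exact Real.rpow_lt_rpow_of_exponent_lt one_lt_two (by linarith)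
  have ht : Tendsto (fun j : ℕ => C * ((2:ℝ)^(-E))^j) atTop atTop :=
    (tendsto_pow_atTop_atTop_of_one_lt h2).const_mul_atTop hC
  filter_upwards [ht.eventually_gt_atTop M] with j hj
  refine hj.trans_eq ?_
  symm
  rw [one_div, inv_pow, ← Real.rpow_natCast (2:ℝ) j, ← Real.rpow_neg (by norm_num),
    ← Real.rpow_natCast ((2:ℝ)^(-E)) j, ← Real.rpow_mul (by norm_num),
    ← Real.rpow_mul (by norm_num)]
  ring_nf

set_option maxHeartbeats 2000000 in
lemma AO_key (d : ℕ) (hd : 2 ≤ d) (β q : ℝ) (hβ0 : 0 < β) (hq : 1 < q)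
    (g h : Rd d → ℝ) (hg : IntegrableOn g (Metric.ball (0 : Rd d) 1))
    (hIntB : IntegrableOn (fun y => ‖h y‖ ^ q) (Metric.ball (0 : Rd d) 1) volume)
    (hineq : ∀ x ∈ Metric.ball (0 : Rd d) 1, ∀ y ∈ Metric.ball (0 : Rd d) 1,
      x ≠ 0 → y ≠ 0 →
      |‖x‖ ^ (-β) - ‖y‖ ^ (-β)| ≤ ‖x - y‖ * (g x + h y))
    (s : ℝ) (hs : 0 < s) (hs2 : s ≤ 1/2) :
    (AO_c1 β / 2) ^ q * (((2:ℝ)^d - 1) * AO_Br d / 2^d) *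
        (s ^ (-q) * AO_rho d g β s ^ ((d:ℝ) - β*q))
      ≤ ∫ y in Metric.ball (0 : Rd d) 1, ‖h y‖ ^ q := by
  have hq0 : (0:ℝ) < q := by linarith
  have hBr : 0 < AO_Br d := AO_ball_pos d hd
  have h2d : (1:ℝ) < 2^d := AO_two_pow_lt d hd
  have hc₁ : 0 < AO_c1 β := AO_c1_pos hβ0
  set B₁ := Metric.ball (0 : Rd d) 1 with hB₁
  set A := Metric.ball (0 : Rd d) (2*s) \ Metric.ball (0 : Rd d) s with hA
  have hAsub : A ⊆ B₁ := fun x hx => Metric.ball_subset_ball (by linarith) hx.1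
  have hAmeas : MeasurableSet A := measurableSet_ball.diff measurableSet_ball
  have hvol : (volume A).toReal = ((2:ℝ)^d - 1) * s^d * AO_Br d := AO_annulus_vol d hd s hs
  have hvolpos : 0 < (volume A).toReal := by
    rw [hvol]; exact mul_pos (mul_pos (by linarith) (by positivity)) hBr
  have hfinA : volume A ≠ ∞ :=
    ((measure_mono (diff_subset)).trans_lt measure_ball_lt_top).ne
  have hintA : IntegrableOn (fun x => |g x|) A volume := (hg.mono_set hAsub).abs
  obtain ⟨x, hxA, hgx⟩ := AO_exists_small d g A hAmeas hintA hvolpos hfinA s hs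
  have hgx' : |g x| ≤ AO_G d g s := by
    unfold AO_G AO_I
    rw [← hvol]
    exact hgx
  have hGpos : 0 < AO_G d g s := AO_G_pos d hd g hs
  have hxup : ‖x‖ < 2*s := by
    have := hxA.1; rwa [mem_ball_zero_iff] at this
  have hxlo : s ≤ ‖x‖ := by
    have := hxA.2; rw [mem_ball_zero_iff] at this; linarith [not_lt.1 this]
  have hx0 : x ≠ 0 := by
    intro hx0; rw [hx0, norm_zero] at hxlo; linarith
  have hxB₁ : x ∈ B₁ := by rw [hB₁, mem_ball_zero_iff]; linarith
  -- pointwise lower bound for h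
  have hlower : ∀ y : Rd d, y ≠ 0 → ‖y‖ ≤ s/2 →
      AO_c1 β * ‖y‖ ^ (-β) / s - AO_G d g s ≤ h y := by
    intro y hy0 hy
    have hyn : 0 < ‖y‖ := norm_pos_iff.2 hy0
    have hyB₁ : y ∈ B₁ := by rw [hB₁, mem_ball_zero_iff]; linarith
    have hineq' := hineq x hxB₁ y hyB₁ hx0 hy0
    have hpow : 0 < ‖y‖ ^ (-β) := Real.rpow_pos_of_pos hyn _
    have hxpow : ‖x‖ ^ (-β) ≤ (2:ℝ) ^ (-β) * ‖y‖ ^ (-β) := by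
      have h2y : 2*‖y‖ ≤ ‖x‖ := by linarith
      calc ‖x‖ ^ (-β) ≤ (2*‖y‖) ^ (-β) :=
            Real.rpow_le_rpow_of_nonpos (by positivity) h2y (neg_nonpos.2 hβ0.le)
        _ = 2 ^ (-β) * ‖y‖ ^ (-β) := Real.mul_rpow (by norm_num) hyn.le
    have hc₀ : 0 < 1 - (2:ℝ) ^ (-β) := by
      have := Real.rpow_lt_one_of_one_lt_of_neg one_lt_two (neg_lt_zero.2 hβ0); linarith
    have hlhs : (1 - (2:ℝ) ^ (-β)) * ‖y‖ ^ (-β) ≤ |‖x‖ ^ (-β) - ‖y‖ ^ (-β)| := by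
      have h1 : ‖y‖ ^ (-β) - ‖x‖ ^ (-β) ≤ |‖x‖ ^ (-β) - ‖y‖ ^ (-β)| := by
        rw [abs_sub_comm]; exact le_abs_self _
      nlinarith
    have hdist : ‖x - y‖ ≤ 3*s := by
      calc ‖x - y‖ ≤ ‖x‖ + ‖y‖ := norm_sub_le _ _
        _ ≤ 3*s := by linarith
    have hsum0 : 0 ≤ g x + h y := by
      by_contra hneg
      push_neg at hneg
      have h1 : ‖x - y‖ * (g x + h y) ≤ 0 :=
        mul_nonpos_of_nonneg_of_nonpos (norm_nonneg _) hneg.le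
      nlinarith [hlhs.trans hineq']
    have hchain : (1 - (2:ℝ) ^ (-β)) * ‖y‖ ^ (-β) ≤ 3*s*(g x + h y) := by
      calc (1 - (2:ℝ) ^ (-β)) * ‖y‖ ^ (-β) ≤ ‖x - y‖ * (g x + h y) := hlhs.trans hineq'
        _ ≤ 3*s*(g x + h y) := mul_le_mul_of_nonneg_right hdist hsum0
    have hdiv : AO_c1 β * ‖y‖ ^ (-β) / s ≤ g x + h y := by
      rw [div_le_iff₀ hs]
      unfold AO_c1
      nlinarith
    have hx_le : g x ≤ AO_G d g s := (le_abs_self _).trans hgx'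
    linarith
  -- the small annulus
  set ρ := AO_rho d g β s with hρdef
  have hWpos : 0 < AO_W d g β s := AO_W_pos d hd g hβ0 hs
  have hρpos : 0 < ρ := AO_rho_pos d hd g hβ0 hs
  have hρs : ρ ≤ s/2 := min_le_left _ _
  have hρW : ρ ≤ (AO_W d g β s) ^ (1/β) := min_le_right _ _
  have hρβ : ρ ^ β ≤ AO_W d g β s := by
    have h1 := Real.rpow_le_rpow hρpos.le hρW hβ0.le
    rwa [← Real.rpow_mul hWpos.le, one_div_mul_cancel hβ0.ne', Real.rpow_one] at h1
  have hρβpos : 0 < ρ ^ β := Real.rpow_pos_of_pos hρpos _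
  have hGρ : AO_G d g s ≤ AO_c1 β * ρ ^ (-β) / (2*s) := by
    have h1 : ρ ^ β * (2 * s * AO_G d g s) ≤ AO_c1 β := by
      rw [AO_W] at hρβ
      exact (le_div_iff₀ (by positivity)).1 hρβ
    rw [Real.rpow_neg hρpos.le, le_div_iff₀ (by linarith : (0:ℝ) < 2*s),
      ← mul_le_mul_iff_of_pos_right hρβpos]
    have h2 : AO_c1 β * (ρ ^ β)⁻¹ * ρ ^ β = AO_c1 β := by field_simp
    rw [h2]; nlinarith
  set Y := Metric.ball (0 : Rd d) ρ \ Metric.ball (0 : Rd d) (ρ/2) with hY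
  have hYmeas : MeasurableSet Y := measurableSet_ball.diff measurableSet_ball
  have hYvol : (volume Y).toReal = ((2:ℝ)^d - 1) * (ρ/2)^d * AO_Br d := by
    have := AO_annulus_vol d hd (ρ/2) (by linarith)
    rwa [show 2*(ρ/2) = ρ by ring] at this
  have hYsub : Y ⊆ B₁ := fun y hy => Metric.ball_subset_ball (by linarith) hy.1
  have hYfin : volume Y ≠ ∞ :=
    ((measure_mono (diff_subset)).trans_lt measure_ball_lt_top).ne
  set L := AO_c1 β * ρ ^ (-β) / (2*s) with hL
  have hρnegpos : 0 < ρ ^ (-β) := Real.rpow_pos_of_pos hρpos _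
  have hLpos : 0 < L := div_pos (mul_pos hc₁ hρnegpos) (by linarith)
  have hLh : ∀ y ∈ Y, L ≤ h y := by
    intro y hy
    have hy1 : ‖y‖ < ρ := by have := hy.1; rwa [mem_ball_zero_iff] at this
    have hy2 : ρ/2 ≤ ‖y‖ := by
      have := hy.2; rw [mem_ball_zero_iff] at this; linarith [not_lt.1 this]
    have hyn : 0 < ‖y‖ := by linarith
    have hy0 : y ≠ 0 := by intro hy0; rw [hy0, norm_zero] at hyn; linarith
    have h1 := hlower y hy0 (by linarith)
    have hyρ : ρ ^ (-β) ≤ ‖y‖ ^ (-β) :=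
      Real.rpow_le_rpow_of_nonpos hyn hy1.le (neg_nonpos.2 hβ0.le)
    have h2 : AO_c1 β * ρ ^ (-β) / s ≤ AO_c1 β * ‖y‖ ^ (-β) / s := by gcongr
    have hid : AO_c1 β * ρ ^ (-β) / s - AO_c1 β * ρ ^ (-β) / (2*s)
        = AO_c1 β * ρ ^ (-β) / (2*s) := by
      field_simp
      ring
    rw [hL]
    linarith
  have hIntY : IntegrableOn (fun y => ‖h y‖ ^ q) Y volume := hIntB.mono_set hYsub
  have hstep1 : L ^ q * (volume Y).toReal ≤ ∫ y in Y, ‖h y‖ ^ q := by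
    have hmono : ∫ _ in Y, (L ^ q) ≤ ∫ y in Y, ‖h y‖ ^ q := by
      refine setIntegral_mono_on (integrableOn_const hYfin) hIntY hYmeas ?_
      intro y hy
      have h1 : L ≤ ‖h y‖ := by
        have := hLh y hy
        calc L ≤ h y := this
          _ ≤ |h y| := le_abs_self _
          _ = ‖h y‖ := (Real.norm_eq_abs _).symm
      exact Real.rpow_le_rpow hLpos.le h1 hq0.le
    rwa [setIntegral_const, smul_eq_mul, mul_comm] at hmono
  have hstep2 : ∫ y in Y, ‖h y‖ ^ q ≤ ∫ y in B₁, ‖h y‖ ^ q := by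
    refine setIntegral_mono_set hIntB ?_ (HasSubset.Subset.eventuallyLE hYsub)
    exact Filter.Eventually.of_forall fun y => by positivity
  -- algebra
  have hLq : L ^ q = (AO_c1 β / 2) ^ q * (ρ ^ (-(β*q)) * s ^ (-q)) := by
    have h1 : L = (AO_c1 β / 2) * (ρ ^ (-β) * s⁻¹) := by rw [hL]; ring
    rw [h1, Real.mul_rpow (by positivity) (by positivity),
        Real.mul_rpow hρnegpos.le (by positivity),
        ← Real.rpow_mul hρpos.le, Real.inv_rpow hs.le, ← Real.rpow_neg hs.le, neg_mul]
  have hρsplit : ρ ^ ((d:ℝ) - β*q) = ρ ^ (d:ℕ) * ρ ^ (-(β*q)) := by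
    rw [show (d:ℝ) - β*q = (d:ℝ) + (-(β*q)) by ring, Real.rpow_add hρpos,
      Real.rpow_natCast]
  calc (AO_c1 β / 2) ^ q * (((2:ℝ)^d - 1) * AO_Br d / 2^d) *
        (s ^ (-q) * ρ ^ ((d:ℝ) - β*q))
      = L ^ q * (volume Y).toReal := by
        rw [hLq, hYvol, hρsplit, div_pow ρ 2 d]; ring
    _ ≤ ∫ y in Y, ‖h y‖ ^ q := hstep1
    _ ≤ ∫ y in B₁, ‖h y‖ ^ q := hstep2

lemma AO_I_small (d : ℕ) (hd : 2 ≤ d) (g : Rd d → ℝ)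
    (hg : IntegrableOn g (Metric.ball (0 : Rd d) 1)) (c : ℝ) (hc : 0 < c) :
    ∀ᶠ j : ℕ in atTop, AO_I d g ((1/2:ℝ)^j) ≤ c := by
  haveI := AO_nontrivial d (by omega)
  set B₁ := Metric.ball (0 : Rd d) 1 with hB₁
  have habs : Integrable (fun x => |g x|) (volume.restrict B₁) := hg.abs
  set F : ℕ → Rd d → ℝ :=
    fun j x => (Metric.ball (0 : Rd d) (2*(1/2:ℝ)^j)).indicator (fun x => |g x|) x with hF
  have hJ : Tendsto (fun j : ℕ => ∫ x in B₁, F j x) atTop (𝓝 (∫ _ in B₁, (0:ℝ))) := by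
    refine tendsto_integral_of_dominated_convergence (fun x => |g x|)
      (fun j => habs.aestronglyMeasurable.indicator measurableSet_ball) habs ?_ ?_
    · intro j
      refine Filter.Eventually.of_forall fun x => ?_
      by_cases hx : x ∈ Metric.ball (0 : Rd d) (2*(1/2:ℝ)^j)
      · rw [hF]; simp only [Set.indicator_of_mem hx]
        rw [Real.norm_eq_abs, abs_abs]
      · rw [hF]; simp only [Set.indicator_of_notMem hx]
        simpa using abs_nonneg (g x)
    · have h0 : ∀ᵐ x ∂(volume.restrict B₁), x ≠ 0 := by
        refine ae_restrict_of_ae ?_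
        rw [ae_iff]
        have : {x : Rd d | ¬ x ≠ 0} = {0} := by ext x; simp
        rw [this]
        exact measure_singleton 0
      filter_upwards [h0] with x hx0
      have hxn : 0 < ‖x‖ := norm_pos_iff.2 hx0
      have hev : ∀ᶠ j : ℕ in atTop, F j x = 0 := by
        have htend : Tendsto (fun j : ℕ => 2*(1/2:ℝ)^j) atTop (𝓝 (2*0)) :=
          (tendsto_pow_atTop_nhds_zero_of_lt_one (by norm_num) (by norm_num)).const_mul 2
        rw [mul_zero] at htend
        filter_upwards [htend.eventually_lt_const hxn] with j hj
        rw [hF]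
        refine Set.indicator_of_notMem ?_ _
        rw [mem_ball_zero_iff]
        linarith
      exact Tendsto.congr' (hev.mono fun j hj => hj.symm) tendsto_const_nhds
  rw [integral_zero] at hJ
  have hlt := hJ.eventually_lt_const hc
  filter_upwards [hlt, eventually_ge_atTop 1] with j hj hj1
  set s := ((1/2:ℝ))^j with hs'
  have hs : 0 < s := by positivity
  have hs2 : s ≤ 1/2 := by
    rw [hs']
    calc ((1/2:ℝ))^j ≤ (1/2:ℝ)^1 := pow_le_pow_of_le_one (by norm_num) (by norm_num) hj1
      _ = 1/2 := pow_one _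
  have hsubB : Metric.ball (0 : Rd d) (2*s) ⊆ B₁ := Metric.ball_subset_ball (by linarith)
  have hle : AO_I d g s ≤ ∫ x in B₁, F j x := by
    rw [hF]
    simp only []
    rw [setIntegral_indicator measurableSet_ball]
    unfold AO_I
    have habs' : IntegrableOn (fun x => |g x|) B₁ volume := habs
    refine setIntegral_mono_set (habs'.mono_set inter_subset_left)
      (Filter.Eventually.of_forall fun y => abs_nonneg _)
      (HasSubset.Subset.eventuallyLE fun y hy => ⟨hsubB hy.1, hy.1⟩)
  linarith

set_option maxHeartbeats 2000000 in
/-- **Optimality of the asymmetric Lusin–Lipschitz exponent range.**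
If `d ≥ 2`, `0 < β < d`, `q > 1`, and there are `g ∈ L¹(B₁)` and `h ∈ L^q(B₁)` with
`| |x|^{-β} − |y|^{-β} | ≤ |x − y| (g(x) + h(y))` for all (nonzero) `x, y ∈ B₁`,
then `q ≤ (d−1)/β`. -/
theorem asymmetric_estimate_optimality (d : ℕ) (hd : 2 ≤ d) (β q : ℝ)
    (hβ0 : 0 < β) (hβd : β < d) (hq : 1 < q) (g h : Rd d → ℝ)
    (hg : IntegrableOn g (Metric.ball (0 : Rd d) 1))
    (hh : MemLp h (ENNReal.ofReal q) (volume.restrict (Metric.ball (0 : Rd d) 1)))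
    (hineq : ∀ x ∈ Metric.ball (0 : Rd d) 1, ∀ y ∈ Metric.ball (0 : Rd d) 1,
      x ≠ 0 → y ≠ 0 →
      |‖x‖ ^ (-β) - ‖y‖ ^ (-β)| ≤ ‖x - y‖ * (g x + h y)) :
    q ≤ (d - 1) / β := by
  by_contra hcon
  push_neg at hcon
  have hβq : (d:ℝ) - 1 < q * β := (div_lt_iff₀ hβ0).1 hcon
  have hq0 : (0:ℝ) < q := by linarith
  have hd2 : (2:ℝ) ≤ (d:ℝ) := by exact_mod_cast hd
  have hBr : 0 < AO_Br d := AO_ball_pos d hd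
  have h2d : (1:ℝ) < 2^d := AO_two_pow_lt d hd
  have hc₁ : 0 < AO_c1 β := AO_c1_pos hβ0
  set B₁ := Metric.ball (0 : Rd d) 1 with hB₁
  -- integrability of ‖h‖^q
  have hIntB : IntegrableOn (fun y => ‖h y‖ ^ q) B₁ volume := by
    have := hh.integrable_norm_rpow (by simp [ENNReal.ofReal_pos.2 hq0, (ENNReal.ofReal_pos.2 hq0).ne'])
      ENNReal.ofReal_ne_top
    simpa [IntegrableOn, ENNReal.toReal_ofReal hq0.le] using this
  set M := ∫ y in B₁, ‖h y‖ ^ q with hM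
  set e := (d:ℝ) - β*q with he
  set c₆ := (AO_c1 β / 2) ^ q * (((2:ℝ)^d - 1) * AO_Br d / 2^d) with hc₆def
  have hc₆ : 0 < c₆ := by
    rw [hc₆def]
    have h1 : 0 < (AO_c1 β / 2) ^ q := Real.rpow_pos_of_pos (by linarith) _
    have h2 : 0 < ((2:ℝ)^d - 1) * AO_Br d / 2^d := by
      apply div_pos (mul_pos (by linarith) hBr) (by positivity)
    positivity
  have hE₁ : e - q < 0 := by rw [he]; nlinarith
  set E₂ := ((d:ℝ) - 1) * ((1/β)*e) - q with hE₂def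
  have hE₂ : E₂ < 0 := by
    have h' : ((d:ℝ) - 1)*e < q*β := by
      nlinarith [mul_lt_mul_of_pos_left hβq (show (0:ℝ) < d by linarith)]
    have h2 : ((d:ℝ) - 1)*((1/β)*e) < q := by
      rw [show ((d:ℝ) - 1)*((1/β)*e) = (((d:ℝ) - 1)*e)/β by ring]
      exact (div_lt_iff₀ hβ0).2 (by linarith)
    rw [hE₂def]; linarith
  have hev1 := AO_ev_lt (c₆ * (2:ℝ)^(-e)) (e - q) M
    (mul_pos hc₆ (Real.rpow_pos_of_pos two_pos _)) hE₁
  have hev2 := AO_ev_lt (c₆ * (AO_c1 β / 2)^((1/β)*e)) E₂ M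
    (mul_pos hc₆ (Real.rpow_pos_of_pos (by linarith) _)) hE₂
  have hev3 := AO_I_small d hd g hg (((2:ℝ)^d - 1) * AO_Br d / 4)
    (by apply div_pos (mul_pos (by linarith) hBr) (by norm_num))
  obtain ⟨j, hj1, hevI, hev1j, hev2j⟩ :=
    ((eventually_ge_atTop 1).and (hev3.and (hev1.and hev2))).exists
  set s := ((1/2:ℝ))^j with hsdef
  have hs : 0 < s := by positivity
  have hs2 : s ≤ 1/2 := by
    rw [hsdef]
    calc ((1/2:ℝ))^j ≤ (1/2:ℝ)^1 := pow_le_pow_of_le_one (by norm_num) (by norm_num) hj1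
      _ = 1/2 := pow_one _
  have hkey := AO_key d hd β q hβ0 hq g h hg hIntB hineq s hs hs2
  rw [← hM, ← he, ← hc₆def] at hkey
  -- basic positivity
  have hGpos : 0 < AO_G d g s := AO_G_pos d hd g hs
  have hWpos : 0 < AO_W d g β s := AO_W_pos d hd g hβ0 hs
  have hρpos : 0 < AO_rho d g β s := AO_rho_pos d hd g hβ0 hs
  have hsq : 0 < s ^ (-q) := Real.rpow_pos_of_pos hs _
  -- common computation for the (s/2) branch
  have hcalc : c₆ * (s ^ (-q) * (s/2) ^ e) = (c₆ * (2:ℝ)^(-e)) * s ^ (e - q) := by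
    have h1 : (s/2) ^ e = s ^ e * (2:ℝ)^(-e) := by
      rw [show s/2 = s * 2⁻¹ by ring, Real.mul_rpow hs.le (by norm_num),
        Real.inv_rpow (by norm_num), ← Real.rpow_neg (by norm_num)]
    have h2 : s ^ (e - q) = s ^ e * s ^ (-q) := by
      rw [← Real.rpow_add hs]; ring_nf
    rw [h1, h2]; ring
  rcases min_cases (s/2) ((AO_W d g β s) ^ (1/β)) with ⟨hmin, hle⟩ | ⟨hmin, hlt⟩
  · -- ρ = s/2
    have hρeq : AO_rho d g β s = s/2 := by rw [AO_rho]; exact hmin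
    rw [hρeq] at hkey
    rw [← hcalc] at hev1j
    linarith
  · -- ρ = W^{1/β} < s/2
    have hρeq : AO_rho d g β s = (AO_W d g β s) ^ (1/β) := by rw [AO_rho]; exact hmin
    rcases le_or_gt 0 e with he0 | he0
    · -- 0 ≤ e : use W lower bound
      have hsdG : s ^ ((d:ℝ)) * AO_G d g s ≤ 1 := by
        rw [Real.rpow_natCast]
        have hsd : (0:ℝ) < s^d := by positivity
        have hne1 : ((2:ℝ)^d - 1) ≠ 0 := by linarith
        have hne2 : AO_Br d ≠ 0 := hBr.ne'
        have ht1 : s^d * (2 * AO_I d g s / (((2:ℝ)^d - 1) * s^d * AO_Br d))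
            = 2 * AO_I d g s / (((2:ℝ)^d - 1) * AO_Br d) := by
          field_simp
        have ht1b : 2 * AO_I d g s / (((2:ℝ)^d - 1) * AO_Br d) ≤ 1/2 := by
          rw [div_le_iff₀ (mul_pos (by linarith) hBr)]
          linarith [hevI]
        have ht2 : s^d * s ≤ 1/2 := by
          have h3 : s^d ≤ 1 := pow_le_one₀ hs.le (by linarith)
          nlinarith
        rw [AO_G, mul_add, ht1]
        linarith
      have hW_lb : (AO_c1 β / 2) * s ^ ((d:ℝ) - 1) ≤ AO_W d g β s := by
        rw [AO_W, le_div_iff₀ (by positivity)]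
        have hss : s ^ ((d:ℝ) - 1) * s = s ^ ((d:ℝ)) := by
          nth_rewrite 2 [← Real.rpow_one s]
          rw [← Real.rpow_add hs]; ring_nf
        calc AO_c1 β / 2 * s ^ ((d:ℝ) - 1) * (2 * s * AO_G d g s)
            = AO_c1 β * ((s ^ ((d:ℝ) - 1) * s) * AO_G d g s) := by ring
          _ = AO_c1 β * (s ^ ((d:ℝ)) * AO_G d g s) := by rw [hss]
          _ ≤ AO_c1 β * 1 := by
              exact mul_le_mul_of_nonneg_left hsdG hc₁.le
          _ = AO_c1 β := mul_one _
      have hWe : (AO_W d g β s) ^ ((1/β)*e) = ((AO_W d g β s) ^ (1/β)) ^ e :=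
        Real.rpow_mul hWpos.le _ _
      have hbase : 0 ≤ (AO_c1 β / 2) * s ^ ((d:ℝ) - 1) := by positivity
      have hA : ((AO_c1 β / 2) * s ^ ((d:ℝ) - 1)) ^ ((1/β)*e)
          ≤ (AO_W d g β s) ^ ((1/β)*e) :=
        Real.rpow_le_rpow hbase hW_lb (by positivity)
      have hexpand : ((AO_c1 β / 2) * s ^ ((d:ℝ) - 1)) ^ ((1/β)*e)
          = (AO_c1 β / 2) ^ ((1/β)*e) * s ^ (((d:ℝ) - 1)*((1/β)*e)) := by
        rw [Real.mul_rpow (by positivity) (by positivity), ← Real.rpow_mul hs.le]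
      have hsE₂ : s ^ E₂ = s ^ (((d:ℝ) - 1)*((1/β)*e)) * s ^ (-q) := by
        rw [hE₂def, show ((d:ℝ) - 1) * ((1/β)*e) - q = (((d:ℝ) - 1)*((1/β)*e)) + (-q) by ring,
          Real.rpow_add hs]
      have hchain : (c₆ * (AO_c1 β / 2)^((1/β)*e)) * s ^ E₂
          ≤ c₆ * (s ^ (-q) * AO_rho d g β s ^ e) := by
        rw [hρeq, ← hWe, hsE₂]
        calc c₆ * (AO_c1 β / 2)^((1/β)*e) * (s ^ (((d:ℝ) - 1)*((1/β)*e)) * s ^ (-q))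
            = (c₆ * s ^ (-q)) * (((AO_c1 β / 2)) ^ ((1/β)*e) * s ^ (((d:ℝ) - 1)*((1/β)*e))) := by
              ring
          _ = (c₆ * s ^ (-q)) * ((AO_c1 β / 2) * s ^ ((d:ℝ) - 1)) ^ ((1/β)*e) := by
              rw [hexpand]
          _ ≤ (c₆ * s ^ (-q)) * (AO_W d g β s) ^ ((1/β)*e) := by
              exact mul_le_mul_of_nonneg_left hA (by positivity)
          _ = c₆ * (s ^ (-q) * (AO_W d g β s) ^ ((1/β)*e)) := by ring
      linarith
    · -- e < 0 : use ρ ≤ s/2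
      have hρle : AO_rho d g β s ≤ s/2 := by rw [hρeq]; exact hlt.le
      have hmono : (s/2) ^ e ≤ AO_rho d g β s ^ e :=
        Real.rpow_le_rpow_of_nonpos hρpos hρle he0.le
      have h2 : c₆ * (s ^ (-q) * (s/2) ^ e) ≤ c₆ * (s ^ (-q) * AO_rho d g β s ^ e) := by
        apply mul_le_mul_of_nonneg_left _ hc₆.le
        exact mul_le_mul_of_nonneg_left hmono hsq.le
      rw [← hcalc] at hev1j
      linarith
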